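/- If the pilot estimate equals the full-data least-squares solution, β₀ = β̂_n, and not all vectors e_i·x_i are zero (with e_i = y_i − x_iᵀβ̂_n, and e_i ≠ 0, x_i ≠ 0 for all i so the probabilities are well defined and positive), then the gradient-based sampling probabilities π_i⁰ = ‖x_i‖·|y_i − x_iᵀβ₀| / Σ_j ‖x_j‖·|y_j − x_jᵀβ₀| coincide with the optimal probabilities π_i^e = ‖x_i‖·|e_i|/Σ_j‖x_j‖·|e_j|, and consequently σ_b²(π⁰) = min over probability vectors π with positive entries of σ_b²(π) = ( (1/n)·Σ_i ‖x_i‖·|e_i| )², where σ_b²(π) = (1/n²)·Σ_i π_i⁻¹·‖x_i‖²·e_i². -/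

import Mathlib

open Matrix

/-- Euclidean norm of a vector in ℝ^d. -/
noncomputable def euclNorm {d : ℕ} (v : Fin d → ℝ) : ℝ := Real.sqrt (∑ i, v i ^ 2)

lemma euclNorm_pos {d : ℕ} {v : Fin d → ℝ} (hv : v ≠ 0) : 0 < euclNorm v := by
  obtain ⟨k, hk⟩ := Function.ne_iff.mp hv
  apply Real.sqrt_pos.mpr
  apply Finset.sum_pos' (fun i _ => sq_nonneg _)
  exact ⟨k, Finset.mem_univ k, sq_pos_of_ne_zero hk⟩

lemma euclNorm_sq {d : ℕ} (v : Fin d → ℝ) : euclNorm v ^ 2 = ∑ i, v i ^ 2 :=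
  Real.sq_sqrt (Finset.sum_nonneg fun i _ => sq_nonneg _)

/-- exact case of Corollary 1: if the pilot estimate equals the full-data
least-squares solution, `β₀ = β̂_n`, then the gradient-based sampling probabilities `π⁰`
coincide with the optimal probabilities `π^e`, and `σ_b²(π⁰)` equals the minimum
`((1/n)Σ_i ‖x_i‖|e_i|)²` of `σ_b²(π)` over probability vectors with positive entries. -/
theorem stmt18 {n d : ℕ} (hn : 1 ≤ n) (hd : 1 ≤ d)
    (x : Fin n → Fin d → ℝ) (y : Fin n → ℝ)
    (Sn : Matrix (Fin d) (Fin d) ℝ)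
    (hSn : Sn = (n : ℝ)⁻¹ • ∑ i, vecMulVec (x i) (x i))
    (hpd : Sn.PosDef)
    (βhat : Fin d → ℝ) (hβ : βhat = Sn⁻¹ *ᵥ ((n : ℝ)⁻¹ • ∑ i, y i • x i))
    (e : Fin n → ℝ) (he : ∀ i, e i = y i - ∑ k, x i k * βhat k)
    (he0 : ∀ i, e i ≠ 0) (hx0 : ∀ i, x i ≠ 0)
    (β₀ : Fin d → ℝ) (hβ₀ : β₀ = βhat)
    (sb2 : (Fin n → ℝ) → ℝ)
    (hsb2 : ∀ w, sb2 w = ((n : ℝ) ^ 2)⁻¹ * ∑ i, (w i)⁻¹ * (∑ k, x i k ^ 2) * e i ^ 2)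
    (π0 : Fin n → ℝ)
    (hπ0 : ∀ i, π0 i =
      euclNorm (x i) * |y i - ∑ k, x i k * β₀ k| /
        ∑ j, euclNorm (x j) * |y j - ∑ k, x j k * β₀ k|)
    (πe : Fin n → ℝ)
    (hπe : ∀ i, πe i = euclNorm (x i) * |e i| / ∑ j, euclNorm (x j) * |e j|) :
    (∀ i, π0 i = πe i) ∧
      sb2 π0 = ((n : ℝ)⁻¹ * ∑ i, euclNorm (x i) * |e i|) ^ 2 ∧
      (∀ w : Fin n → ℝ, (∀ i, 0 < w i) → (∑ i, w i) = 1 → sb2 π0 ≤ sb2 w) := by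
  set a : Fin n → ℝ := fun i => euclNorm (x i) * |e i| with ha_def
  have hresid : ∀ i, y i - ∑ k, x i k * β₀ k = e i := by
    intro i; rw [hβ₀, he i]
  have hπ0' : ∀ i, π0 i = a i / ∑ j, a j := by
    intro i
    simp only [hπ0 i, hresid, ha_def]
  have ha : ∀ i, 0 < a i := fun i =>
    mul_pos (euclNorm_pos (hx0 i)) (abs_pos.mpr (he0 i))
  have hne : Nonempty (Fin n) := Fin.pos_iff_nonempty.mp hn
  have hS : 0 < ∑ j, a j := Finset.sum_pos (fun j _ => ha j) Finset.univ_nonempty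
  have hterm : ∀ i, (∑ k, x i k ^ 2) * e i ^ 2 = a i ^ 2 := by
    intro i
    rw [ha_def]
    rw [mul_pow, euclNorm_sq, sq_abs]
  have key : sb2 π0 = ((n : ℝ) ^ 2)⁻¹ * (∑ j, a j) ^ 2 := by
    rw [hsb2]
    congr 1
    rw [sq]
    rw [Finset.sum_mul]
    apply Finset.sum_congr rfl
    intro i _
    rw [mul_assoc, hterm i, hπ0' i]
    field_simp [(ha i).ne']
  refine ⟨fun i => by rw [hπ0' i, hπe i], ?_, ?_⟩
  · rw [key, mul_pow, inv_pow]
  · intro w hw hw1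
    rw [key, hsb2]
    apply mul_le_mul_of_nonneg_left _ (by positivity)
    calc (∑ j, a j) ^ 2 = (∑ j, Real.sqrt (w j) * (a j / Real.sqrt (w j))) ^ 2 := by
          congr 1
          apply Finset.sum_congr rfl
          intro j _
          rw [mul_div_cancel₀ _ (Real.sqrt_ne_zero'.mpr (hw j)).symm.symm]
      _ ≤ (∑ j, Real.sqrt (w j) ^ 2) * ∑ j, (a j / Real.sqrt (w j)) ^ 2 :=
          Finset.sum_mul_sq_le_sq_mul_sq Finset.univ _ _
      _ = ∑ i, (w i)⁻¹ * (∑ k, x i k ^ 2) * e i ^ 2 := by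
          rw [show (∑ j, Real.sqrt (w j) ^ 2) = 1 by
            rw [← hw1]; exact Finset.sum_congr rfl fun j _ => Real.sq_sqrt (hw j).le]
          rw [one_mul]
          apply Finset.sum_congr rfl
          intro i _
          rw [div_pow, Real.sq_sqrt (hw i).le, mul_assoc, hterm i, div_eq_inv_mul]
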